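/- Let (X,Q,H,Δ) be a reversible energy landscape satisfying the degenerate series Condition. For any state x ∉ {x₂, x₁¹,...,x₁ⁿ, x₀} with H(x) ≤ H(x₂), we have Φ(x, {x₁¹,...,x₁ⁿ, x₀}) - H(x) < Γ_m and Φ(x, x₂) - H(x₂) ≥ Γ_m. -/

import Mathlib

open Filter Topology
open scoped Classical

/-- Height along a path starting at `x` with subsequent states `l`. -/
def pathHeight {S : Type*} (H : S → ℝ) (Δ : S → S → ℝ) : S → List S → ℝ
  | x, [] => H x
  | x, y :: l => max (H x + Δ x y) (pathHeight H Δ y l)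

/-- Communication height between two states. -/
noncomputable def commHeight {S : Type*} (H : S → ℝ) (Δ : S → S → ℝ) (x y : S) : ℝ :=
  sInf {c | ∃ l : List S,
    (x :: l).getLast (List.cons_ne_nil x l) = y ∧ c = pathHeight H Δ x l}

/-- Communication height between a state and a set. -/
noncomputable def commSet {S : Type*} (H : S → ℝ) (Δ : S → S → ℝ) (x : S) (A : Set S) : ℝ :=
  sInf (commHeight H Δ x '' A)

/-- The states with energy strictly below that of `x`. -/
def Ibelow {S : Type*} (H : S → ℝ) (x : S) : Set S := {y | H y < H x}

/-- Stability level of a state. -/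
noncomputable def stabLevel {S : Type*} (H : S → ℝ) (Δ : S → S → ℝ) (x : S) : ℝ :=
  commSet H Δ x (Ibelow H x) - H x

/-- Ground states: global minima of the energy. -/
def stableSet {S : Type*} (H : S → ℝ) : Set S := {x | ∀ y, H x ≤ H y}

/-- Maximal stability level among non-stable states. -/
noncomputable def gammaM {S : Type*} (H : S → ℝ) (Δ : S → S → ℝ) : ℝ :=
  sSup (stabLevel H Δ '' (stableSet H)ᶜ)

/-- Metastable states: non-stable states attaining the maximal stability level. -/
def metaSet {S : Type*} (H : S → ℝ) (Δ : S → S → ℝ) : Set S :=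
  {x | x ∉ stableSet H ∧ stabLevel H Δ x = gammaM H Δ}

section Aux
variable {S : Type*} [Fintype S] (H : S → ℝ) (Δ : S → S → ℝ)

/-- The set of path heights of paths from `x` to `y`. -/
def pathSet (x y : S) : Set ℝ :=
  {c | ∃ l : List S,
    (x :: l).getLast (List.cons_ne_nil x l) = y ∧ c = pathHeight H Δ x l}

omit [Fintype S] in
lemma ph_mem_Fvals (x : S) (l : List S) :
    pathHeight H Δ x l ∈ Set.range H ∪ Set.range (fun p : S × S => H p.1 + Δ p.1 p.2) := by
  induction l generalizing x with
  | nil => exact Or.inl ⟨x, rfl⟩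
  | cons y l ih =>
      rcases max_cases (H x + Δ x y) (pathHeight H Δ y l) with ⟨h, _⟩ | ⟨h, _⟩
      · rw [pathHeight, h]; exact Or.inr ⟨(x, y), rfl⟩
      · rw [pathHeight, h]; exact ih y

lemma pathSet_finite (x y : S) : (pathSet H Δ x y).Finite := by
  apply Set.Finite.subset
    ((Set.finite_range H).union (Set.finite_range (fun p : S × S => H p.1 + Δ p.1 p.2)))
  rintro c ⟨l, -, rfl⟩; exact ph_mem_Fvals H Δ x l

omit [Fintype S] in
lemma pathSet_nonempty (x y : S) : (pathSet H Δ x y).Nonempty := by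
  refine ⟨pathHeight H Δ x [y], [y], ?_, rfl⟩
  simp [List.getLast]

lemma commHeight_mem (x y : S) : commHeight H Δ x y ∈ pathSet H Δ x y :=
  (pathSet_nonempty H Δ x y).csInf_mem (pathSet_finite H Δ x y)

lemma commHeight_le (x y : S) (l : List S)
    (hl : (x :: l).getLast (List.cons_ne_nil x l) = y) :
    commHeight H Δ x y ≤ pathHeight H Δ x l :=
  csInf_le (pathSet_finite H Δ x y).bddBelow ⟨l, hl, rfl⟩

omit [Fintype S] in
lemma ph_ge_start (hΔ : ∀ x y, 0 ≤ Δ x y) (x : S) (l : List S) :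
    H x ≤ pathHeight H Δ x l := by
  cases l with
  | nil => exact le_refl _
  | cons y l => exact le_max_of_le_left (by linarith [hΔ x y])

omit [Fintype S] in
lemma ph_append (hΔ : ∀ x y, 0 ≤ Δ x y) (x : S) (l m : List S) :
    pathHeight H Δ x (l ++ m)
      = max (pathHeight H Δ x l)
            (pathHeight H Δ ((x :: l).getLast (List.cons_ne_nil x l)) m) := by
  induction l generalizing x with
  | nil =>
      simp only [List.nil_append, pathHeight, List.getLast_singleton]
      exact (max_eq_right (ph_ge_start H Δ hΔ x m)).symm
  | cons y l ih =>
      have hgl : (x :: y :: l).getLast (List.cons_ne_nil _ _)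
          = (y :: l).getLast (List.cons_ne_nil _ _) := List.getLast_cons _
      simp only [List.cons_append, pathHeight, List.append_eq, ih y, hgl, max_assoc]

omit [Fintype S] in
lemma ph_reverse (hΔ : ∀ x y, 0 ≤ Δ x y) (hrev : ∀ x y, H x + Δ x y = H y + Δ y x)
    (l : List S) (x : S) :
    ∃ l' : List S,
      (((x :: l).getLast (List.cons_ne_nil x l)) :: l').getLast (List.cons_ne_nil _ _) = x ∧
      pathHeight H Δ ((x :: l).getLast (List.cons_ne_nil x l)) l' = pathHeight H Δ x l := by
  induction l generalizing x with
  | nil => exact ⟨[], by simp, by simp [List.getLast_singleton, pathHeight]⟩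
  | cons y l ih =>
      obtain ⟨l', h1, h2⟩ := ih y
      set g := (y :: l).getLast (List.cons_ne_nil y l) with hg
      have hgl : (x :: y :: l).getLast (List.cons_ne_nil _ _) = g := List.getLast_cons _
      refine ⟨l' ++ [x], ?_, ?_⟩
      · rw [hgl]
        exact List.getLast_append_singleton (g :: l')
      · rw [hgl, ph_append H Δ hΔ, h1]
        have hh : pathHeight H Δ y [x] = max (H y + Δ y x) (H x) := rfl
        rw [h2, hh, ← hrev x y]
        have hx1 : H x ≤ H x + Δ x y := by linarith [hΔ x y]
        rw [max_eq_left hx1, max_comm]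
        rfl

lemma commHeight_symm (hΔ : ∀ x y, 0 ≤ Δ x y) (hrev : ∀ x y, H x + Δ x y = H y + Δ y x)
    (x y : S) : commHeight H Δ x y = commHeight H Δ y x := by
  have key : ∀ a b : S, commHeight H Δ b a ≤ commHeight H Δ a b := by
    intro a b
    obtain ⟨l, hl, he⟩ := commHeight_mem H Δ a b
    obtain ⟨l', h1, h2⟩ := ph_reverse H Δ hΔ hrev l a
    rw [hl] at h1 h2
    rw [he, ← h2]
    exact commHeight_le H Δ b a l' h1
  exact le_antisymm (key y x) (key x y)

lemma commHeight_triangle (hΔ : ∀ x y, 0 ≤ Δ x y) (x y z : S) :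
    commHeight H Δ x z ≤ max (commHeight H Δ x y) (commHeight H Δ y z) := by
  obtain ⟨l1, hl1, he1⟩ := commHeight_mem H Δ x y
  obtain ⟨l2, hl2, he2⟩ := commHeight_mem H Δ y z
  have hlast : (x :: (l1 ++ l2)).getLast (List.cons_ne_nil _ _) = z := by
    cases l2 with
    | nil =>
        have : y = z := by simpa [List.getLast_singleton] using hl2
        simpa [this] using hl1
    | cons a l2 =>
        have h2 : (a :: l2 : List S).getLast (List.cons_ne_nil a l2) = z :=
          (List.getLast_cons (List.cons_ne_nil a l2)).symm.trans hl2
        exact (List.getLast_append_of_ne_nil (l := x :: l1) (List.cons_ne_nil x (l1 ++ a :: l2)) (List.cons_ne_nil a l2)).trans h2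
  calc commHeight H Δ x z ≤ pathHeight H Δ x (l1 ++ l2) :=
        commHeight_le H Δ x z _ hlast
    _ = max (pathHeight H Δ x l1) (pathHeight H Δ y l2) := by
        rw [ph_append H Δ hΔ, hl1]
    _ = max (commHeight H Δ x y) (commHeight H Δ y z) := by rw [he1, he2]

lemma commSet_exists (x : S) (A : Set S) (hA : A.Nonempty) :
    ∃ a ∈ A, commSet H Δ x A = commHeight H Δ x a := by
  have h := (hA.image (commHeight H Δ x)).csInf_mem (A.toFinite.image _)
  obtain ⟨a, ha, he⟩ := h
  exact ⟨a, ha, he.symm⟩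

lemma commSet_le (x : S) (A : Set S) (a : S) (ha : a ∈ A) :
    commSet H Δ x A ≤ commHeight H Δ x a :=
  csInf_le (A.toFinite.image _).bddBelow (Set.mem_image_of_mem _ ha)

lemma stab_le_gamma (x : S) (hx : x ∉ stableSet H) :
    stabLevel H Δ x ≤ gammaM H Δ :=
  le_csSup (((stableSet H)ᶜ.toFinite.image _).bddAbove) (Set.mem_image_of_mem _ hx)

lemma part_one {n : ℕ} (hΔ : ∀ x y, 0 ≤ Δ x y)
    (x₀ x₂ : S) (x₁ : Fin n → S)
    (hS : stableSet H = {x₀})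
    (hM : metaSet H Δ = insert x₂ (Set.range x₁)) :
    ∀ N (x : S), (Finset.univ.filter (fun z => H z < H x)).card ≤ N →
      x ∉ insert x₂ (insert x₀ (Set.range x₁)) → H x ≤ H x₂ →
      commSet H Δ x (insert x₀ (Set.range x₁)) < H x + gammaM H Δ := by
  intro N
  induction N with
  | zero =>
      intro x hcard hx hHx
      exfalso
      have hxne0 : x ≠ x₀ := by
        intro h; exact hx (by simp [h])
      have hH0x : H x₀ < H x := by
        have hle : H x₀ ≤ H x := by
          have : x₀ ∈ stableSet H := by rw [hS]; rfl
          exact this x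
        rcases lt_or_eq_of_le hle with h | h
        · exact h
        · exfalso
          have : x ∈ stableSet H := fun y => h ▸ (show x₀ ∈ stableSet H by rw [hS]; rfl) y
          rw [hS] at this
          exact hxne0 this
      have hmem : x₀ ∈ Finset.univ.filter (fun z => H z < H x) := by simp [hH0x]
      have := Finset.card_pos.mpr ⟨x₀, hmem⟩
      omega
  | succ N ih =>
      intro x hcard hx hHx
      have hxne0 : x ≠ x₀ := by intro h; exact hx (by simp [h])
      have hH0x : H x₀ < H x := by
        have hle : H x₀ ≤ H x := by
          have : x₀ ∈ stableSet H := by rw [hS]; rfl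
          exact this x
        rcases lt_or_eq_of_le hle with h | h
        · exact h
        · exfalso
          have : x ∈ stableSet H := fun y => h ▸ (show x₀ ∈ stableSet H by rw [hS]; rfl) y
          rw [hS] at this
          exact hxne0 this
      have hxnstab : x ∉ stableSet H := by rw [hS]; simpa using hxne0
      have hxnmeta : x ∉ metaSet H Δ := by
        rw [hM]
        intro h
        apply hx
        rcases h with h | h
        · exact Or.inl h
        · exact Or.inr (Or.inr h)
      have hlt : stabLevel H Δ x < gammaM H Δ := by
        rcases lt_or_eq_of_le (stab_le_gamma H Δ x hxnstab) with h | h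
        · exact h
        · exact absurd (⟨hxnstab, h⟩ : x ∈ metaSet H Δ) hxnmeta
      obtain ⟨y, hy, hye⟩ := commSet_exists H Δ x (Ibelow H x) ⟨x₀, hH0x⟩
      have hch : commHeight H Δ x y < H x + gammaM H Δ := by
        have : commSet H Δ x (Ibelow H x) - H x < gammaM H Δ := hlt
        rw [hye] at this
        linarith
      have hyx : H y < H x := hy
      by_cases hyT : y ∈ insert x₀ (Set.range x₁)
      · exact lt_of_le_of_lt (commSet_le H Δ x _ y hyT) hch
      · have hynot : y ∉ insert x₂ (insert x₀ (Set.range x₁)) := by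
          intro h
          rcases h with h | h
          · subst h; exact absurd (lt_of_lt_of_le hyx hHx) (lt_irrefl _)
          · exact hyT h
        have hcard' : (Finset.univ.filter (fun z => H z < H y)).card ≤ N := by
          have hsub : Finset.univ.filter (fun z => H z < H y)
              ⊆ (Finset.univ.filter (fun z => H z < H x)).erase y := by
            intro z hz
            simp only [Finset.mem_filter, Finset.mem_univ, true_and] at hz
            refine Finset.mem_erase.mpr ⟨?_, by simp [lt_trans hz hyx]⟩
            intro h; subst h; exact absurd hz (lt_irrefl _)
          have hymem : y ∈ Finset.univ.filter (fun z => H z < H x) := by simp [hyx]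
          have := Finset.card_le_card hsub
          rw [Finset.card_erase_of_mem hymem] at this
          omega
        have hIH := ih y hcard' hynot (le_of_lt (lt_of_lt_of_le hyx hHx))
        obtain ⟨t, htT, hte⟩ := commSet_exists H Δ y (insert x₀ (Set.range x₁))
          ⟨x₀, Set.mem_insert _ _⟩
        have hcht : commHeight H Δ y t < H y + gammaM H Δ := hte ▸ hIH
        have htri := commHeight_triangle H Δ hΔ x y t
        have hxt : commHeight H Δ x t < H x + gammaM H Δ := by
          apply lt_of_le_of_lt htri
          apply max_lt hch
          linarith
        exact lt_of_le_of_lt (commSet_le H Δ x _ t htT) hxt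

end Aux

/-- For any state `x` outside `{x₂, x₁¹,…,x₁ⁿ, x₀}` with `H(x) ≤ H(x₂)`:
`Φ(x,{x₁¹,…,x₁ⁿ,x₀}) - H(x) < Γ_m` and `Φ(x,x₂) - H(x₂) ≥ Γ_m`. -/
theorem comm_bounds_below_x2 {S : Type*} [Fintype S]
    (H : S → ℝ) (Δ : S → S → ℝ)
    (hΔ : ∀ x y, 0 ≤ Δ x y) (hrev : ∀ x y, H x + Δ x y = H y + Δ y x)
    (n : ℕ) (hn : 1 ≤ n) (x₀ x₂ : S) (x₁ : Fin n → S)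
    (hinj : Function.Injective x₁)
    (hS : stableSet H = {x₀})
    (hM : metaSet H Δ = insert x₂ (Set.range x₁))
    (hE2 : ∀ r, H (x₁ r) < H x₂)
    (hEq : ∀ r q, H (x₁ r) = H (x₁ q))
    (hBar : ∀ r q, commHeight H Δ (x₁ r) (x₁ q) - H (x₁ r) < gammaM H Δ)
    (x : S) (hx : x ∉ insert x₂ (insert x₀ (Set.range x₁)))
    (hHx : H x ≤ H x₂) :
    commSet H Δ x (insert x₀ (Set.range x₁)) - H x < gammaM H Δ ∧
    gammaM H Δ ≤ commHeight H Δ x x₂ - H x₂ := by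
  have h1 : commSet H Δ x (insert x₀ (Set.range x₁)) < H x + gammaM H Δ :=
    part_one H Δ hΔ x₀ x₂ x₁ hS hM _ x le_rfl hx hHx
  constructor
  · linarith
  · by_contra hcon
    push_neg at hcon
    have hch2 : commHeight H Δ x x₂ < H x₂ + gammaM H Δ := by linarith
    have hx2meta : x₂ ∈ metaSet H Δ := by rw [hM]; exact Set.mem_insert _ _
    obtain ⟨h2s, h2g⟩ := hx2meta
    have hcs2 : commSet H Δ x₂ (Ibelow H x₂) = H x₂ + gammaM H Δ := by
      have : commSet H Δ x₂ (Ibelow H x₂) - H x₂ = gammaM H Δ := h2g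
      linarith
    obtain ⟨t, htT, hte⟩ := commSet_exists H Δ x (insert x₀ (Set.range x₁))
      ⟨x₀, Set.mem_insert _ _⟩
    have hcht : commHeight H Δ x t < H x₂ + gammaM H Δ := by
      have := hte ▸ h1
      linarith
    have hHt : H t < H x₂ := by
      rcases htT with h | ⟨r, hr⟩
      · subst h
        simp only [stableSet, Set.mem_setOf_eq, not_forall, not_le] at h2s
        obtain ⟨y, hy⟩ := h2s
        have : H t ≤ H y := by
          have : t ∈ stableSet H := by rw [hS]; rfl
          exact this y
        linarith
      · subst hr; exact hE2 r
    have hle1 : commSet H Δ x₂ (Ibelow H x₂) ≤ commHeight H Δ x₂ t :=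
      commSet_le H Δ x₂ _ t hHt
    have htri := commHeight_triangle H Δ hΔ x₂ x t
    have hsym : commHeight H Δ x₂ x = commHeight H Δ x x₂ := commHeight_symm H Δ hΔ hrev x₂ x
    have : commHeight H Δ x₂ t < H x₂ + gammaM H Δ := by
      apply lt_of_le_of_lt htri
      apply max_lt
      · rw [hsym]; exact hch2
      · exact hcht
    linarith
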